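/- Let S be a category with finite limits and C an abstract simplicial complex. An S-valued presheaf P on C is separated (each canonical arrow into the product over a cover is monic) if and only if each canonical arrow ⟨P_{{x}⊆U}⟩_{x∈U} : P(U) → ∏_{x∈U} P({x}) is a monomorphism, i.e., iff P is a subpresheaf of a sheaf. -/

import Mathlib

open CategoryTheory CategoryTheory.Limits Opposite
open scoped Classical

/-- An abstract simplicial complex on a vertex set `X`. -/
structure SC (X : Type) where
  faces : Set (Finset X)
  down_closed : ∀ {s t : Finset X}, s ∈ faces → t ⊆ s → t ∈ faces
  singleton_mem : ∀ x : X, {x} ∈ faces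

/-- The poset of faces of a simplicial complex, ordered by inclusion. -/
def Face {X : Type} (C : SC X) : Type := {U : Finset X // U ∈ C.faces}

instance {X : Type} (C : SC X) : PartialOrder (Face C) :=
  Subtype.partialOrder _

/-- The singleton face on a vertex. -/
def sFace {X : Type} (C : SC X) (x : X) : Face C := ⟨{x}, C.singleton_mem x⟩

variable {S : Type*} [Category S]

/-- An `S`-valued presheaf on the simplicial complex `C`. -/
abbrev Psh {X : Type} (C : SC X) (S : Type*) [Category S] : Type _ :=
  (Face C)ᵒᵖ ⥤ S

/-- The restriction arrow `P(V) ⟶ P(U)` for faces `U ⊆ V`. -/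
def resA {X : Type} {C : SC X} (P : Psh C S) {U V : Face C} (h : U ≤ V) :
    P.obj (op V) ⟶ P.obj (op U) :=
  P.map (homOfLE h).op

/-- The canonical arrow `P(U) ⟶ ∏_{x∈U} P({x})`. -/
noncomputable def canMap {X : Type} {C : SC X} [HasFiniteLimits S]
    (P : Psh C S) (U : Face C) :
    P.obj (op U) ⟶ ∏ᶜ (fun x : {x // x ∈ U.1} => P.obj (op (sFace C x.1))) :=
  Pi.lift fun x => resA P (show sFace C x.1 ≤ U from Finset.singleton_subset_iff.mpr x.2)

/-- The arrow `P(U) ⟶ ∏ᵢ P(Uᵢ)` for a cover `⋃ᵢ Uᵢ = U`. -/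
noncomputable def coverMap {X : Type} {C : SC X} [HasFiniteLimits S]
    (P : Psh C S) {ι : Type} [Fintype ι] (Ui : ι → Face C) (U : Face C)
    (hcov : ∀ i, Ui i ≤ U) :
    P.obj (op U) ⟶ ∏ᶜ (fun i => P.obj (op (Ui i))) :=
  Pi.lift fun i => resA P (hcov i)

/-- The intersection of two faces, as a face. -/
noncomputable def interFace {X : Type} (C : SC X) (U V : Face C) : Face C :=
  ⟨U.1 ∩ V.1, C.down_closed U.2 (by classical exact Finset.inter_subset_left)⟩

/-- The first comparison arrow `∏ᵢ P(Uᵢ) ⟶ ∏_{j,k} P(Uⱼ ∩ U_k)`. -/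
noncomputable def cmpL {X : Type} {C : SC X} [HasFiniteLimits S]
    (P : Psh C S) {ι : Type} [Fintype ι] (Ui : ι → Face C) :
    (∏ᶜ (fun i => P.obj (op (Ui i)))) ⟶
      ∏ᶜ (fun jk : ι × ι => P.obj (op (interFace C (Ui jk.1) (Ui jk.2)))) :=
  Pi.lift fun jk => Pi.π _ jk.1 ≫
    resA P (show interFace C (Ui jk.1) (Ui jk.2) ≤ Ui jk.1 from by
      classical exact Finset.inter_subset_left)

/-- The second comparison arrow `∏ᵢ P(Uᵢ) ⟶ ∏_{j,k} P(Uⱼ ∩ U_k)`. -/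
noncomputable def cmpR {X : Type} {C : SC X} [HasFiniteLimits S]
    (P : Psh C S) {ι : Type} [Fintype ι] (Ui : ι → Face C) :
    (∏ᶜ (fun i => P.obj (op (Ui i)))) ⟶
      ∏ᶜ (fun jk : ι × ι => P.obj (op (interFace C (Ui jk.1) (Ui jk.2)))) :=
  Pi.lift fun jk => Pi.π _ jk.2 ≫
    resA P (show interFace C (Ui jk.1) (Ui jk.2) ≤ Ui jk.2 from by
      classical exact Finset.inter_subset_right)

/-- The sheaf condition for an `S`-valued presheaf on a simplicial complex:
for every (finite) cover `⋃ᵢ Uᵢ = U`, the arrow `P(U) ⟶ ∏ᵢ P(Uᵢ)` is the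
equalizer of the two comparison arrows into `∏_{j,k} P(Uⱼ ∩ U_k)`. -/
def IsSheafS {X : Type} {C : SC X} [HasFiniteLimits S] (P : Psh C S) : Prop :=
  ∀ (ι : Type) (_ : Fintype ι) (Ui : ι → Face C) (U : Face C)
    (hcov : ∀ i, Ui i ≤ U), (∀ x, x ∈ U.1 → ∃ i, x ∈ (Ui i).1) →
    (∀ (W : S) (k : W ⟶ ∏ᶜ (fun i => P.obj (op (Ui i)))),
      k ≫ cmpL P Ui = k ≫ cmpR P Ui →
      ∃! l : W ⟶ P.obj (op U), l ≫ coverMap P Ui U hcov = k)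

/-- The separatedness condition: for every (finite) cover `⋃ᵢ Uᵢ = U`, the
arrow `P(U) ⟶ ∏ᵢ P(Uᵢ)` is a monomorphism. -/
def IsSeparatedS {X : Type} {C : SC X} [HasFiniteLimits S] (P : Psh C S) : Prop :=
  ∀ (ι : Type) (_ : Fintype ι) (Ui : ι → Face C) (U : Face C)
    (hcov : ∀ i, Ui i ≤ U), (∀ x, x ∈ U.1 → ∃ i, x ∈ (Ui i).1) →
    Mono (coverMap P Ui U hcov)

section Aux

variable {X : Type} {C : SC X}

lemma Face.sub {U V : Face C} (h : U ≤ V) : U.1 ⊆ V.1 := h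

lemma resA_comp (P : Psh C S) {U V W : Face C} (h1 : U ≤ V) (h2 : V ≤ W) :
    resA P h2 ≫ resA P h1 = resA P (h1.trans h2) := by
  rw [resA, resA, resA, ← P.map_comp]
  congr 1

lemma coverMap_π [HasFiniteLimits S] (P : Psh C S) {ι : Type} [Fintype ι]
    (Ui : ι → Face C) (U : Face C) (hcov : ∀ i, Ui i ≤ U) (i : ι) :
    coverMap P Ui U hcov ≫ Pi.π _ i = resA P (hcov i) := by
  simp [coverMap]

lemma canMap_π [HasFiniteLimits S] (P : Psh C S) (U : Face C) (x : {x // x ∈ U.1}) :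
    canMap P U ≫ Pi.π _ x =
      resA P (show sFace C x.1 ≤ U from Finset.singleton_subset_iff.mpr x.2) := by
  simp [canMap]

/-- The sheaf `U ↦ ∏_{x∈U} P({x})`. -/
noncomputable def shF [HasFiniteLimits S] (P : Psh C S) : Psh C S where
  obj V := ∏ᶜ (fun x : {x // x ∈ V.unop.1} => P.obj (op (sFace C x.1)))
  map {V U} f := Pi.lift fun x =>
    Pi.π _ (⟨x.1, Face.sub (leOfHom f.unop) x.2⟩ : {x // x ∈ V.unop.1})
  map_id := by
    intro V; apply Pi.hom_ext; intro x; simp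
  map_comp := by
    intro V U T f g; apply Pi.hom_ext; intro x; simp

lemma shF_map_π [HasFiniteLimits S] (P : Psh C S) {U V : Face C} (h : U ≤ V)
    (x : {x // x ∈ U.1}) :
    resA (shF P) h ≫ Pi.π _ x =
      Pi.π _ (⟨x.1, Face.sub h x.2⟩ : {x // x ∈ V.1}) := by
  simp [resA, shF]

/-- The canonical natural transformation `P ⟶ shF P`. -/
noncomputable def natCan [HasFiniteLimits S] (P : Psh C S) : P ⟶ shF P where
  app V := canMap P V.unop
  naturality := by
    intro V U f
    apply Pi.hom_ext; intro x
    have hUV : U.unop ≤ V.unop := leOfHom f.unop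
    have hP : P.map f = resA P hUV := rfl
    have hF : (shF P).map f = resA (shF P) hUV := rfl
    erw [Category.assoc, Category.assoc, hP, hF, shF_map_π, canMap_π, canMap_π,
      resA_comp]

lemma shF_isSheaf [HasFiniteLimits S] (P : Psh C S) : IsSheafS (shF P) := by
  intro ι _ Ui U hcov hsur W k hk
  have compat : ∀ (j j' : ι) (x : X) (hj : x ∈ (Ui j).1) (hj' : x ∈ (Ui j').1),
      k ≫ Pi.π _ j ≫ Pi.π _ (⟨x, hj⟩ : {y // y ∈ (Ui j).1}) =
      k ≫ Pi.π _ j' ≫ Pi.π _ (⟨x, hj'⟩ : {y // y ∈ (Ui j').1}) := by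
    intro j j' x hj hj'
    have h1 := hk =≫ (Pi.π _ (j, j') ≫
      Pi.π _ (⟨x, Finset.mem_inter.2 ⟨hj, hj'⟩⟩ :
        {y // y ∈ (interFace C (Ui j) (Ui j')).1}))
    simp only [cmpL, cmpR, Category.assoc, limit.lift_π_assoc, limit.lift_π,
      Fan.mk_π_app, Pi.lift_π_assoc, Pi.lift_π] at h1
    erw [Pi.lift_π_assoc, Pi.lift_π_assoc, Category.assoc, Category.assoc, shF_map_π,
      shF_map_π] at h1
    exact h1
  choose idx hidx using hsur
  refine ⟨Pi.lift fun x => k ≫ Pi.π _ (idx x.1 x.2) ≫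
      Pi.π _ (⟨x.1, hidx x.1 x.2⟩ : {y // y ∈ (Ui (idx x.1 x.2)).1}), ?_, ?_⟩
  · apply Pi.hom_ext; intro i
    erw [Category.assoc, coverMap_π]
    apply Pi.hom_ext; intro x
    erw [Category.assoc, shF_map_π]
    simp only [limit.lift_π, Fan.mk_π_app, Category.assoc, Pi.lift_π]
    erw [Pi.lift_π, Category.assoc]
    exact compat _ i x.1 _ x.2
  · intro l hl
    apply Pi.hom_ext; intro x
    have h2 : l ≫ resA (shF P) (hcov (idx x.1 x.2)) = k ≫ Pi.π _ (idx x.1 x.2) := by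
      rw [← coverMap_π (shF P) Ui U hcov, ← Category.assoc, hl]
    calc l ≫ Pi.π _ x
        = l ≫ resA (shF P) (hcov (idx x.1 x.2)) ≫
            Pi.π _ (⟨x.1, hidx x.1 x.2⟩ : {y // y ∈ (Ui (idx x.1 x.2)).1}) := by
          rw [shF_map_π]
      _ = (l ≫ resA (shF P) (hcov (idx x.1 x.2))) ≫ Pi.π _ _ := by erw [Category.assoc]
      _ = k ≫ Pi.π _ (idx x.1 x.2) ≫ Pi.π _ _ := by rw [h2]; erw [Category.assoc]
      _ = _ := by
          simp only [limit.lift_π, Fan.mk_π_app, Category.assoc, Pi.lift_π]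

lemma sheaf_coverMap_mono [HasFiniteLimits S] {F : Psh C S} (hF : IsSheafS F)
    {ι : Type} [Fintype ι] (Ui : ι → Face C) (U : Face C) (hcov : ∀ i, Ui i ≤ U)
    (hsur : ∀ x, x ∈ U.1 → ∃ i, x ∈ (Ui i).1) :
    Mono (coverMap F Ui U hcov) := by
  constructor
  intro W f g h
  have hcomp : coverMap F Ui U hcov ≫ cmpL F Ui = coverMap F Ui U hcov ≫ cmpR F Ui := by
    apply Pi.hom_ext; intro jk
    simp only [cmpL, cmpR, Category.assoc, limit.lift_π, Fan.mk_π_app]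
    rw [← Category.assoc, ← Category.assoc, coverMap_π, coverMap_π, resA_comp,
      resA_comp]
  obtain ⟨l, -, hu⟩ := hF ι ‹Fintype ι› Ui U hcov hsur W (g ≫ coverMap F Ui U hcov)
    (by rw [Category.assoc, Category.assoc, hcomp])
  exact (hu f h).trans (hu g rfl).symm

lemma sep_iff_canMono [HasFiniteLimits S] (P : Psh C S) :
    IsSeparatedS P ↔ ∀ U : Face C, Mono (canMap P U) := by
  constructor
  · intro hsep U
    have h := hsep {x // x ∈ U.1} inferInstance (fun x => sFace C x.1) U
      (fun x => Finset.singleton_subset_iff.mpr x.2)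
      (fun x hx => ⟨⟨x, hx⟩, Finset.mem_singleton_self x⟩)
    exact h
  · intro hcan ι _ Ui U hcov hsur
    constructor
    intro W f g h
    have h' : ∀ i, f ≫ resA P (hcov i) = g ≫ resA P (hcov i) := by
      intro i
      have := h =≫ Pi.π _ i
      rwa [Category.assoc, Category.assoc, coverMap_π] at this
    haveI := hcan U
    rw [← cancel_mono (canMap P U)]
    apply Pi.hom_ext
    intro x
    obtain ⟨i, hi⟩ := hsur x.1 x.2
    have hx : sFace C x.1 ≤ Ui i := Finset.singleton_subset_iff.mpr hi
    rw [Category.assoc, Category.assoc, canMap_π,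
      show resA P (show sFace C x.1 ≤ U from Finset.singleton_subset_iff.mpr x.2)
        = resA P (hcov i) ≫ resA P hx from (resA_comp P hx (hcov i)).symm,
      ← Category.assoc, ← Category.assoc, h' i]

end Aux

/-- An `S`-valued presheaf on a simplicial complex is
separated (the arrow into the product over every cover is monic) iff every
canonical arrow `P(U) ⟶ ∏_{x∈U} P({x})` is a monomorphism, i.e. iff `P` is a
subpresheaf of a sheaf (admits a levelwise-monic natural transformation into
some sheaf). -/
theorem stmt7 {X : Type} {C : SC X} {S : Type*} [Category S]
    [HasFiniteLimits S] (P : Psh C S) :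
    (IsSeparatedS P ↔ ∀ U : Face C, Mono (canMap P U)) ∧
    (IsSeparatedS P ↔ ∃ (F : Psh C S) (η : P ⟶ F), IsSheafS F ∧
      ∀ U : Face C, Mono (η.app (op U))) := by
  have part1 := sep_iff_canMono P
  refine ⟨part1, ?_, ?_⟩
  · intro hs
    exact ⟨shF P, natCan P, shF_isSheaf P, fun U => part1.mp hs U⟩
  · rintro ⟨F, η, hF, hm⟩
    intro ι _ Ui U hcov hsur
    constructor
    intro W f g h
    haveI := sheaf_coverMap_mono hF Ui U hcov hsur
    haveI := hm U
    have nat : ∀ i, resA P (hcov i) ≫ η.app (op (Ui i))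
        = η.app (op U) ≫ resA F (hcov i) := fun i =>
      η.naturality (homOfLE (hcov i)).op
    have h2 : f ≫ η.app (op U) ≫ coverMap F Ui U hcov
        = g ≫ η.app (op U) ≫ coverMap F Ui U hcov := by
      apply Pi.hom_ext; intro i
      simp only [Category.assoc, coverMap_π]
      rw [← nat i, ← Category.assoc, ← Category.assoc, ← coverMap_π P Ui U hcov i,
        ← Category.assoc, ← Category.assoc, h]
    rw [← cancel_mono (η.app (op U))]
    exact (cancel_mono (coverMap F Ui U hcov)).mp (by
      rw [Category.assoc, Category.assoc]; exact h2)
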